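/- arXiv:1506.02996 — 2 statements merged into one kernel-verified Lean document; each statement's English description precedes it below -/
import Mathlib

section
/- Let ε ≥ 0, α_0 > 0, α_1 > 0, and assume hypotheses (H). There exists a constant C > 0, depending only on P^max, N^max, α_0, α_1, V, ΔΨ_0^pzc, ΔΨ_1^pzc, λ, the interface coefficients (m_u^i, k_u^i, a_u^i, b_u^i)_{i=0,1; u=P,N} and T (and independent of the mesh and of Δt), such that for every mesh, every time step and every solution of the scheme (S) satisfying 0 ≤ P_i^k ≤ P^max and 0 ≤ N_i^k ≤ N^max for all i, k, one has, for u = P and u = N, Σ_{k=0}^{K−1} Σ_{i=0}^{I} Δt (u_{i+1}^{k+1} − u_i^{k+1})²/h_{i+1/2} + (ε_u/2) Σ_{k=0}^{K−1} Σ_{i=1}^{I} h_i (u_i^{k+1} − u_i^k)² ≤ C; in particular ε_u Σ_{k=0}^{K−1} Σ_{i=1}^{I} h_i (u_i^{k+1} − u_i^k)² ≤ 2C. -/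
open MeasureTheory Real Filter Topology

noncomputable section

namespace Corrosion

/-- The Bernoulli function `B(x) = x / (e^x - 1)`, `B(0) = 1`. -/
def Bern (x : ℝ) : ℝ := if x = 0 then 1 else x / (Real.exp x - 1)

/-- The two species: cations `P` and electrons `N`. -/
inductive Sp | P | N

/-- charge numbers: `z_P = 3`, `z_N = -1`. -/
def z : Sp → ℝ
  | Sp.P => 3
  | Sp.N => -1

/-- A mesh of `[0,1]`: edge points `xe 0 = x_{1/2} = 0 < xe 1 = x_{3/2} < … < xe I = x_{I+1/2} = 1`. -/
structure Mesh where
  I : ℕ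
  hI : 1 ≤ I
  xe : ℕ → ℝ
  xe0 : xe 0 = 0
  xeI : xe I = 1
  mono : ∀ j, j < I → xe j < xe (j + 1)

namespace Mesh

variable (m : Mesh)

/-- cell centers `x_i` for `1 ≤ i ≤ I` , with `x_0 = 0` and `x_{I+1} = 1`. -/
def xc (i : ℕ) : ℝ :=
  if i = 0 then 0 else if i = m.I + 1 then 1 else (m.xe (i - 1) + m.xe i) / 2

/-- `h_i = x_{i+1/2} - x_{i-1/2}` for `1 ≤ i ≤ I`. -/
def h (i : ℕ) : ℝ := m.xe i - m.xe (i - 1)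

/-- `h_{i+1/2} = x_{i+1} - x_i` for `0 ≤ i ≤ I`. -/
def hp (i : ℕ) : ℝ := m.xc (i + 1) - m.xc i

/-- mesh size `h = max_{1 ≤ i ≤ I} h_i`. -/
def size : ℝ := (Finset.Icc 1 m.I).sup' ⟨1, Finset.mem_Icc.mpr ⟨le_refl 1, m.hI⟩⟩ m.h

/-- piecewise constant function associated to a vector `(w_i)_{0 ≤ i ≤ I+1}`:
equal to `w i` on `(x_{i-1/2}, x_{i+1/2})`, to `w 0` at `x = 0`, to `w (I+1)` at `x = 1`. -/
def pw (w : ℕ → ℝ) (x : ℝ) : ℝ :=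
  if x = 0 then w 0 else if x = 1 then w (m.I + 1) else w (sInf {i : ℕ | x < m.xe i})

/-- square of the discrete `H¹` norm `‖w_h‖_{1,T}`. -/
def norm1sq (w : ℕ → ℝ) : ℝ :=
  (∑ i ∈ Finset.range (m.I + 1), (w (i + 1) - w i) ^ 2 / m.hp i) + w 0 ^ 2 + w (m.I + 1) ^ 2

/-- square of the discrete `L²` norm `‖w_h‖_0`. -/
def norm0sq (w : ℕ → ℝ) : ℝ := ∑ i ∈ Finset.Icc 1 m.I, m.h i * w i ^ 2

/-- the discrete dual norm `‖w_h‖_{-1,2,T}`. -/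
def normDual (w : ℕ → ℝ) : ℝ :=
  sSup {r : ℝ | ∃ v : ℕ → ℝ, m.norm1sq v ≤ 1 ∧
    r = ∫ x in Set.Ioo (0:ℝ) 1, m.pw w x * m.pw v x}

/-- piecewise constant space derivative: on `(x_i, x_{i+1})` it equals `(w_{i+1} - w_i)/h_{i+1/2}`. -/
def dpw (w : ℕ → ℝ) (x : ℝ) : ℝ :=
  (w (sInf {i : ℕ | x < m.xc (i + 1)} + 1) - w (sInf {i : ℕ | x < m.xc (i + 1)})) /
    m.hp (sInf {i : ℕ | x < m.xc (i + 1)})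

end Mesh

/-- All the data of the corrosion model. -/
structure Data where
  lam : ℝ
  eps : ℝ
  alpha0 : ℝ
  alpha1 : ℝ
  V : ℝ
  rho : ℝ
  dPsi0 : ℝ
  dPsi1 : ℝ
  umax : Sp → ℝ
  m0 : Sp → ℝ
  k0 : Sp → ℝ
  m1 : Sp → ℝ
  k1 : Sp → ℝ
  a0 : Sp → ℝ
  b0 : Sp → ℝ
  a1 : Sp → ℝ
  b1 : Sp → ℝ
  u0 : Sp → ℝ → ℝ
  lam_pos : 0 < lam
  umax_pos : ∀ u, 0 < umax u
  m0_pos : ∀ u, 0 < m0 u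
  k0_pos : ∀ u, 0 < k0 u
  m1_pos : ∀ u, 0 < m1 u
  k1_pos : ∀ u, 0 < k1 u
  a0_mem : ∀ u, a0 u ∈ Set.Icc (0:ℝ) 1
  b0_mem : ∀ u, b0 u ∈ Set.Icc (0:ℝ) 1
  a1_mem : ∀ u, a1 u ∈ Set.Icc (0:ℝ) 1
  b1_mem : ∀ u, b1 u ∈ Set.Icc (0:ℝ) 1
  u0_meas : ∀ u, Measurable (u0 u)

namespace Data
variable (d : Data)

/-- `ε_P = 1`, `ε_N = ε`. -/
def epsu : Sp → ℝ
  | Sp.P => 1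
  | Sp.N => d.eps

def beta0 (u : Sp) (x : ℝ) : ℝ :=
  d.m0 u * Real.exp (-(z u) * d.b0 u * x) + d.k0 u * Real.exp (z u * d.a0 u * x)

def beta1 (u : Sp) (x : ℝ) : ℝ :=
  d.m1 u * Real.exp (-(z u) * d.b1 u * x) + d.k1 u * Real.exp (z u * d.a1 u * x)

def gamma0 (u : Sp) (x : ℝ) : ℝ := d.m0 u * d.umax u * Real.exp (-(z u) * d.b0 u * x)

def gamma1 (u : Sp) (x : ℝ) : ℝ := d.k1 u * d.umax u * Real.exp (z u * d.a1 u * x)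

/-- Hypotheses (H). -/
def HypH : Prop :=
  (3 * d.umax Sp.P - d.umax Sp.N + d.rho = 0) ∧
  (∀ u, ∀ᵐ x ∂(volume.restrict (Set.Ioo (0:ℝ) 1)), 0 ≤ d.u0 u x ∧ d.u0 u x ≤ d.umax u) ∧
  (-(1 / (3 * d.a0 Sp.P)) * (1 + Real.log (d.alpha0 * d.a0 Sp.P * d.k0 Sp.P)) ≤ d.dPsi0 ∧
    d.dPsi0 ≤ (1 / d.a0 Sp.N) * (1 + Real.log (d.alpha0 * d.a0 Sp.N * d.k0 Sp.N))) ∧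
  (-(1 / d.b1 Sp.N) * (1 + Real.log (d.alpha1 * d.b1 Sp.N * d.m1 Sp.N)) ≤ d.dPsi1 ∧
    d.dPsi1 ≤ (1 / (3 * d.b1 Sp.P)) * (1 + Real.log (d.alpha1 * d.b1 Sp.P * d.m1 Sp.P)))

end Data

/-- `dΨ_{i+1/2} = (Ψ_{i+1} - Ψ_i)/h_{i+1/2}`. -/
def dPsiF (m : Mesh) (Psi : ℕ → ℝ) (i : ℕ) : ℝ := (Psi (i + 1) - Psi i) / m.hp i

/-- the Scharfetter-Gummel numerical flux `F_{u,i+1/2}`. -/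
def Flux (m : Mesh) (d : Data) (u : Sp) (Psi w : ℕ → ℝ) (i : ℕ) : ℝ :=
  (Bern (z u * m.hp i * dPsiF m Psi i) * w i -
    Bern (-(z u) * m.hp i * dPsiF m Psi i) * w (i + 1)) / m.hp i

/-- The fully implicit scheme (S), with time step `Δt = T / K`.
`sol u k i` is `u_i^k` (for `u = P, N`) and `Psi k i` is `Ψ_i^k`. -/
def Scheme (m : Mesh) (d : Data) (T : ℝ) (K : ℕ)
    (sol : Sp → ℕ → ℕ → ℝ) (Psi : ℕ → ℕ → ℝ) : Prop :=
  (∀ u i, 1 ≤ i → i ≤ m.I →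
    sol u 0 i = (1 / m.h i) * ∫ x in Set.Ioo (m.xe (i - 1)) (m.xe i), d.u0 u x) ∧
  (∀ k, k < K → ∀ i, 1 ≤ i → i ≤ m.I →
    -(d.lam ^ 2) * (dPsiF m (Psi (k + 1)) i - dPsiF m (Psi (k + 1)) (i - 1)) =
      m.h i * (3 * sol Sp.P (k + 1) i - sol Sp.N (k + 1) i + d.rho)) ∧
  (∀ u k, k < K → ∀ i, 1 ≤ i → i ≤ m.I →
    d.epsu u * m.h i * (sol u (k + 1) i - sol u k i) / (T / K) +
      Flux m d u (Psi (k + 1)) (sol u (k + 1)) i -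
      Flux m d u (Psi (k + 1)) (sol u (k + 1)) (i - 1) = 0) ∧
  (∀ k, k < K → Psi (k + 1) 0 - d.alpha0 * dPsiF m (Psi (k + 1)) 0 = d.dPsi0) ∧
  (∀ k, k < K →
    Psi (k + 1) (m.I + 1) + d.alpha1 * dPsiF m (Psi (k + 1)) m.I = d.V - d.dPsi1) ∧
  (∀ u k, k < K →
    -(Flux m d u (Psi (k + 1)) (sol u (k + 1)) 0) =
      d.beta0 u (Psi (k + 1) 0) * sol u (k + 1) 0 - d.gamma0 u (Psi (k + 1) 0)) ∧
  (∀ u k, k < K →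
    Flux m d u (Psi (k + 1)) (sol u (k + 1)) m.I =
      d.beta1 u (d.V - Psi (k + 1) (m.I + 1)) * sol u (k + 1) (m.I + 1) -
      d.gamma1 u (d.V - Psi (k + 1) (m.I + 1)))

/-- The stability property `0 ≤ u_i^k ≤ u^max` for all `i, k`. -/
def Stable (m : Mesh) (d : Data) (K : ℕ) (sol : Sp → ℕ → ℕ → ℝ) : Prop :=
  ∀ u k, k ≤ K → ∀ i, i ≤ m.I + 1 → 0 ≤ sol u k i ∧ sol u k i ≤ d.umax u

/-- the approximate space-time solution `w_{h,Δt}`, equal to the piecewise constant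
function built on `w^{k+1}` for `t ∈ [t^k, t^{k+1})`, with `Δt = T/K`. -/
def apx (m : Mesh) (T : ℝ) (K : ℕ) (w : ℕ → ℕ → ℝ) (x t : ℝ) : ℝ :=
  m.pw (w (Nat.floor (t / (T / K)) + 1)) x

/-- the discrete space derivative `∂_{x,T} w_{h,Δt}`. -/
def dapx (m : Mesh) (T : ℝ) (K : ℕ) (w : ℕ → ℕ → ℝ) (x t : ℝ) : ℝ :=
  m.dpw (w (Nat.floor (t / (T / K)) + 1)) x


/-- hyperbolic cotangent `coth y = cosh y / sinh y`. -/
def coth (x : ℝ) : ℝ := Real.cosh x / Real.sinh x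

/-- approximate trace at `x = 0`: `t ∈ [t^k, t^{k+1}) ↦ w_0^{k+1}`. -/
def trace0 (T : ℝ) (K : ℕ) (w : ℕ → ℕ → ℝ) (t : ℝ) : ℝ :=
  w (Nat.floor (t / (T / K)) + 1) 0

/-- approximate trace at `x = 1`: `t ∈ [t^k, t^{k+1}) ↦ w_{I+1}^{k+1}`. -/
def trace1 (m : Mesh) (T : ℝ) (K : ℕ) (w : ℕ → ℕ → ℝ) (t : ℝ) : ℝ :=
  w (Nat.floor (t / (T / K)) + 1) (m.I + 1)

/-- the measure on `(0,1) × (0,T)` (space × time). -/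
def stMeasure (T : ℝ) : MeasureTheory.Measure (ℝ × ℝ) :=
  (MeasureTheory.volume.restrict (Set.Ioo (0:ℝ) 1)).prod
    (MeasureTheory.volume.restrict (Set.Ioo (0:ℝ) T))

end Corrosion


namespace Corrosion

section Aux

lemma Bern_pos (x : ℝ) : 0 < Bern x := by
  unfold Bern
  rcases lt_trichotomy x 0 with h | h | h
  · rw [if_neg (ne_of_lt h)]
    have h1 : Real.exp x - 1 < 0 := by
      have := Real.exp_lt_one_iff.mpr h; linarith
    exact div_pos_of_neg_of_neg h h1
  · simp [h]
  · rw [if_neg (ne_of_gt h)]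
    have h1 : 0 < Real.exp x - 1 := by
      have := Real.one_lt_exp_iff.mpr h; linarith
    exact div_pos h h1

lemma Bern_neg (x : ℝ) : Bern (-x) = Bern x + x := by
  rcases eq_or_ne x 0 with h | h
  · simp [h, Bern]
  · unfold Bern
    rw [if_neg (neg_ne_zero.mpr h), if_neg h]
    have h1 : Real.exp x - 1 ≠ 0 := by
      rcases lt_or_gt_of_ne h with hx | hx
      · have := Real.exp_lt_one_iff.mpr hx; intro hc; linarith
      · have := Real.one_lt_exp_iff.mpr hx; intro hc; linarith
    have h2 : (1 : ℝ) - Real.exp x ≠ 0 := fun hc => h1 (by linarith)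
    have h3 : Real.exp x ≠ 0 := (Real.exp_pos x).ne'
    rw [Real.exp_neg]
    field_simp
    ring

lemma exp_neg_abs_le_Bern (x : ℝ) : Real.exp (-|x|) ≤ Bern x := by
  rcases lt_trichotomy x 0 with h | h | h
  · have h1 : Real.exp (-|x|) ≤ 1 := Real.exp_le_one_iff.mpr (neg_nonpos.mpr (abs_nonneg x))
    have h2 : (1 : ℝ) ≤ Bern x := by
      unfold Bern
      rw [if_neg (ne_of_lt h)]
      have hd : Real.exp x - 1 < 0 := by
        have := Real.exp_lt_one_iff.mpr h; linarith
      rw [le_div_iff_of_neg hd]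
      have := Real.add_one_le_exp x
      linarith
    linarith
  · simp [h, Bern]
  · have habs : |x| = x := abs_of_pos h
    have hd : 0 < Real.exp x - 1 := by
      have := Real.one_lt_exp_iff.mpr h; linarith
    unfold Bern
    rw [if_neg (ne_of_gt h), habs, le_div_iff₀ hd, Real.exp_neg]
    have hinv : (Real.exp x)⁻¹ * (Real.exp x - 1) = 1 - (Real.exp x)⁻¹ := by
      field_simp
    rw [hinv]
    have := Real.add_one_le_exp (-x)
    rw [Real.exp_neg] at this
    linarith

lemma abs_z_le (u : Sp) : |z u| ≤ 3 := by cases u <;> simp [z] <;> norm_num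

lemma epsu_nonneg (d : Data) (heps : 0 ≤ d.eps) (u : Sp) : 0 ≤ d.epsu u := by
  cases u <;> simp [Data.epsu] <;> exact heps

namespace Mesh

variable (m : Mesh)

lemma xe_lt {j k : ℕ} (h : j < k) (hk : k ≤ m.I) : m.xe j < m.xe k := by
  induction k with
  | zero => omega
  | succ n ih =>
    have hn : n < m.I := by omega
    rcases Nat.lt_succ_iff_lt_or_eq.mp h with h' | h'
    · exact (ih h' (by omega)).trans (m.mono n hn)
    · subst h'; exact m.mono j hn

lemma xc_zero : m.xc 0 = 0 := by simp [Mesh.xc]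

lemma xc_last : m.xc (m.I + 1) = 1 := by
  unfold Mesh.xc
  rw [if_neg (by omega), if_pos rfl]

lemma xc_mid {i : ℕ} (h1 : 1 ≤ i) (h2 : i ≤ m.I) :
    m.xc i = (m.xe (i - 1) + m.xe i) / 2 := by
  unfold Mesh.xc
  rw [if_neg (by omega), if_neg (by omega)]

lemma hp_pos {i : ℕ} (hi : i ≤ m.I) : 0 < m.hp i := by
  have hI := m.hI
  unfold Mesh.hp
  rcases Nat.eq_zero_or_pos i with h0 | h1
  · subst h0
    rw [m.xc_zero, m.xc_mid le_rfl hI]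
    have h2 : m.xe 0 < m.xe 1 := m.mono 0 (by omega)
    rw [m.xe0] at h2
    simp only [Nat.sub_self]
    rw [m.xe0]
    linarith
  · rcases Nat.lt_or_ge i m.I with h2 | h2
    · rw [m.xc_mid h1 (le_of_lt h2), m.xc_mid (by omega) (by omega)]
      have h3 : m.xe (i - 1) < m.xe (i + 1) := m.xe_lt (by omega) (by omega)
      have h4 : i + 1 - 1 = i := rfl
      rw [h4]
      linarith
    · have hiI : i = m.I := le_antisymm hi h2
      rw [hiI, m.xc_last, m.xc_mid m.hI le_rfl]
      have h3 : m.xe (m.I - 1) < m.xe m.I := m.xe_lt (by omega) le_rfl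
      rw [m.xeI] at h3 ⊢
      linarith

lemma h_pos {i : ℕ} (h1 : 1 ≤ i) (h2 : i ≤ m.I) : 0 < m.h i := by
  unfold Mesh.h
  have := m.xe_lt (j := i - 1) (k := i) (by omega) h2
  linarith

lemma hp_sum : ∑ i ∈ Finset.range (m.I + 1), m.hp i = 1 := by
  simp only [Mesh.hp]
  rw [Finset.sum_range_sub m.xc, m.xc_last, m.xc_zero]
  ring

lemma hp_le_one {i : ℕ} (hi : i ≤ m.I) : m.hp i ≤ 1 := by
  rw [← m.hp_sum]
  exact Finset.single_le_sum (f := m.hp)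
    (fun j hj => (m.hp_pos (by simpa [Nat.lt_succ_iff] using hj)).le)
    (Finset.mem_range.mpr (by omega))

lemma h_sum' : ∑ i ∈ Finset.range m.I, m.h (i + 1) = 1 := by
  have : ∀ i, m.h (i + 1) = m.xe (i + 1) - m.xe i := fun i => rfl
  simp only [this]
  rw [Finset.sum_range_sub m.xe, m.xeI, m.xe0]
  ring

end Mesh

lemma sum_Icc_one (f : ℕ → ℝ) (n : ℕ) :
    ∑ i ∈ Finset.Icc 1 n, f i = ∑ i ∈ Finset.range n, f (i + 1) := by
  induction n with
  | zero => simp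
  | succ n ih =>
    rw [Finset.sum_Icc_succ_top (by omega), ih, Finset.sum_range_succ]

lemma Mesh.h_sum (m : Mesh) : ∑ i ∈ Finset.Icc 1 m.I, m.h i = 1 := by
  rw [sum_Icc_one, m.h_sum']

end Aux

end Corrosion

namespace Corrosion

section Aux2

lemma abel_sum (F w : ℕ → ℝ) (n : ℕ) :
    ∑ i ∈ Finset.Icc 1 n, (F i - F (i - 1)) * w i
      = F n * w (n + 1) - F 0 * w 0
        - ∑ i ∈ Finset.range (n + 1), F i * (w (i + 1) - w i) := by
  induction n with
  | zero => simp [Finset.sum_range_succ]; ring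
  | succ n ih =>
    rw [Finset.sum_Icc_succ_top (by omega : 1 ≤ n + 1), ih,
      Finset.sum_range_succ (f := fun i => F i * (w (i + 1) - w i)) (n := n + 1)]
    have h : n + 1 - 1 = n := rfl
    rw [h]
    ring

lemma young_aux (b δ s p c a : ℝ) (hp : 0 < p) (hc : 0 < c) (hcb : c ≤ b)
    (hs : |s| ≤ a) :
    c / 2 * δ ^ 2 / p - a ^ 2 / (2 * c) * p ≤ b * δ ^ 2 / p + s * δ := by
  have ha : 0 ≤ a := le_trans (abs_nonneg s) hs
  have h1 : -(a * |δ|) ≤ s * δ := by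
    have h2 : |s * δ| ≤ a * |δ| := by
      rw [abs_mul]
      exact mul_le_mul_of_nonneg_right hs (abs_nonneg δ)
    linarith [neg_abs_le (s * δ)]
  have key : a * |δ| ≤ c / 2 * δ ^ 2 / p + a ^ 2 / (2 * c) * p := by
    have hid : c / 2 * δ ^ 2 / p + a ^ 2 / (2 * c) * p - a * |δ|
        = (c * |δ| - a * p) ^ 2 / (2 * c * p) := by
      rw [show (c * |δ| - a * p) ^ 2
          = c ^ 2 * δ ^ 2 - 2 * (a * c * p) * |δ| + a ^ 2 * p ^ 2 by
        rw [← sq_abs δ]; ring]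
      field_simp
      ring
    nlinarith [div_nonneg (sq_nonneg (c * |δ| - a * p))
      (by positivity : (0:ℝ) ≤ 2 * c * p)]
  have h3 : c * δ ^ 2 / p ≤ b * δ ^ 2 / p := by
    gcongr
  have h4 : c * δ ^ 2 / p = 2 * (c / 2 * δ ^ 2 / p) := by ring
  linarith

lemma halve_mul (t e X : ℝ) (ht : t ≠ 0) : t * (e / (2 * t) * X) = e / 2 * X := by
  field_simp

lemma abs_mul3_le {x y w X Y W : ℝ} (hx : |x| ≤ X) (hy : |y| ≤ Y) (hw : |w| ≤ W) :
    |x * y * w| ≤ X * Y * W := by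
  have h0x := abs_nonneg x; have h0y := abs_nonneg y; have h0w := abs_nonneg w
  rw [abs_mul, abs_mul]
  exact mul_le_mul (mul_le_mul hx hy h0y (le_trans h0x hx)) hw h0w
    (mul_nonneg (le_trans h0x hx) (le_trans h0y hy))

lemma flux_eq (m : Mesh) (d : Data) (u : Sp) (Psi w : ℕ → ℝ) (i : ℕ)
    (hi : i ≤ m.I) :
    -(Flux m d u Psi w i) * (w (i + 1) - w i)
      = Bern (z u * m.hp i * dPsiF m Psi i) * (w (i + 1) - w i) ^ 2 / m.hp i
        + z u * dPsiF m Psi i * w (i + 1) * (w (i + 1) - w i) := by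
  have hp := m.hp_pos hi
  have hne : m.hp i ≠ 0 := hp.ne'
  unfold Flux
  rw [show -(z u) * m.hp i * dPsiF m Psi i
      = -(z u * m.hp i * dPsiF m Psi i) by ring, Bern_neg]
  field_simp
  ring

lemma dPsi_bound (m : Mesh) (Psi : ℕ → ℝ) (lam alpha0 alpha1 V dPsi0 dPsi1 R : ℝ)
    (hlam : 0 < lam) (ha0 : 0 < alpha0) (ha1 : 0 < alpha1) (hR : 0 ≤ R)
    (rho : ℕ → ℝ) (hrho : ∀ i, 1 ≤ i → i ≤ m.I → |rho i| ≤ R)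
    (hpois : ∀ i, 1 ≤ i → i ≤ m.I →
      -(lam ^ 2) * (dPsiF m Psi i - dPsiF m Psi (i - 1)) = m.h i * rho i)
    (hbc0 : Psi 0 - alpha0 * dPsiF m Psi 0 = dPsi0)
    (hbc1 : Psi (m.I + 1) + alpha1 * dPsiF m Psi m.I = V - dPsi1) :
    ∀ i, i ≤ m.I → |dPsiF m Psi i|
      ≤ |V| + |dPsi0| + |dPsi1| + (2 + alpha1) * (R / lam ^ 2) := by
  set S := dPsiF m Psi with hS
  have hlam2 : (0:ℝ) < lam ^ 2 := by positivity
  have hstep : ∀ j, j < m.I → |S (j + 1) - S j| ≤ m.h (j + 1) * R / lam ^ 2 := by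
    intro j hj
    have h1 := hpois (j + 1) (by omega) (by omega)
    have h2 : j + 1 - 1 = j := rfl
    rw [h2] at h1
    have h3 : S (j + 1) - S j = -(m.h (j + 1) * rho (j + 1)) / lam ^ 2 := by
      field_simp at h1 ⊢
      linarith
    rw [h3, abs_div, abs_of_pos hlam2, abs_neg, abs_mul,
      abs_of_pos (m.h_pos (by omega) (by omega))]
    have hh := m.h_pos (i := j + 1) (by omega) (by omega)
    have hr := hrho (j + 1) (by omega) (by omega)
    have : m.h (j + 1) * |rho (j + 1)| ≤ m.h (j + 1) * R :=
      mul_le_mul_of_nonneg_left hr hh.le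
    gcongr
  have hdev : ∀ i, i ≤ m.I → |S i - S 0| ≤ R / lam ^ 2 := by
    intro i hi
    have htel : S i - S 0 = ∑ j ∈ Finset.range i, (S (j + 1) - S j) :=
      (Finset.sum_range_sub S i).symm
    rw [htel]
    calc |∑ j ∈ Finset.range i, (S (j + 1) - S j)|
        ≤ ∑ j ∈ Finset.range i, |S (j + 1) - S j| := Finset.abs_sum_le_sum_abs _ _
      _ ≤ ∑ j ∈ Finset.range i, m.h (j + 1) * R / lam ^ 2 := by
          refine Finset.sum_le_sum fun j hj => ?_
          have := Finset.mem_range.mp hj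
          exact hstep j (by omega)
      _ ≤ ∑ j ∈ Finset.range m.I, m.h (j + 1) * R / lam ^ 2 := by
          refine Finset.sum_le_sum_of_subset_of_nonneg
            (Finset.range_subset_range.mpr hi) fun j hj _ => ?_
          have hjI := Finset.mem_range.mp hj
          have := m.h_pos (i := j + 1) (by omega) (by omega)
          positivity
      _ = R / lam ^ 2 := by
          rw [← Finset.sum_div, ← Finset.sum_mul, m.h_sum', one_mul]
  have htel2 : Psi (m.I + 1) - Psi 0
      = ∑ i ∈ Finset.range (m.I + 1), m.hp i * S i := by
    have h1 : ∀ i ∈ Finset.range (m.I + 1), m.hp i * S i = Psi (i + 1) - Psi i := by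
      intro i hi
      have hiI : i ≤ m.I := by have := Finset.mem_range.mp hi; omega
      have hpne : m.hp i ≠ 0 := (m.hp_pos hiI).ne'
      rw [hS]
      unfold dPsiF
      field_simp
    rw [Finset.sum_congr rfl h1, Finset.sum_range_sub Psi]
  have hsplit : ∑ i ∈ Finset.range (m.I + 1), m.hp i * S i
      = S 0 + ∑ i ∈ Finset.range (m.I + 1), m.hp i * (S i - S 0) := by
    have h1 : ∀ i ∈ Finset.range (m.I + 1),
        m.hp i * S i = m.hp i * S 0 + m.hp i * (S i - S 0) := fun i _ => by ring
    rw [Finset.sum_congr rfl h1, Finset.sum_add_distrib, ← Finset.sum_mul,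
      m.hp_sum, one_mul]
  have herr : |∑ i ∈ Finset.range (m.I + 1), m.hp i * (S i - S 0)| ≤ R / lam ^ 2 := by
    calc |∑ i ∈ Finset.range (m.I + 1), m.hp i * (S i - S 0)|
        ≤ ∑ i ∈ Finset.range (m.I + 1), |m.hp i * (S i - S 0)| :=
          Finset.abs_sum_le_sum_abs _ _
      _ ≤ ∑ i ∈ Finset.range (m.I + 1), m.hp i * (R / lam ^ 2) := by
          refine Finset.sum_le_sum fun i hi => ?_
          have hmem : i ≤ m.I := by have := Finset.mem_range.mp hi; omega
          rw [abs_mul, abs_of_pos (m.hp_pos hmem)]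
          exact mul_le_mul_of_nonneg_left (hdev i hmem) (m.hp_pos hmem).le
      _ = R / lam ^ 2 := by rw [← Finset.sum_mul, m.hp_sum, one_mul]
  have hS0 : |S 0| ≤ |V| + |dPsi0| + |dPsi1| + (1 + alpha1) * (R / lam ^ 2) := by
    have heq : (1 + alpha0 + alpha1) * S 0
        = V - dPsi1 - dPsi0 - alpha1 * (S m.I - S 0)
          - ∑ i ∈ Finset.range (m.I + 1), m.hp i * (S i - S 0) := by
      have h1 : Psi (m.I + 1) - Psi 0
          = S 0 + ∑ i ∈ Finset.range (m.I + 1), m.hp i * (S i - S 0) := by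
        rw [htel2, hsplit]
      linarith [hbc0, hbc1]
    have hRl : 0 ≤ R / lam ^ 2 := div_nonneg hR hlam2.le
    have habs : (1 + alpha0 + alpha1) * |S 0|
        ≤ |V| + |dPsi1| + |dPsi0| + alpha1 * (R / lam ^ 2) + R / lam ^ 2 := by
      rw [← abs_of_pos (show (0:ℝ) < 1 + alpha0 + alpha1 by linarith), ← abs_mul,
        heq]
      have h2 := hdev m.I le_rfl
      have h3 : |alpha1 * (S m.I - S 0)| ≤ alpha1 * (R / lam ^ 2) := by
        rw [abs_mul, abs_of_pos ha1]
        exact mul_le_mul_of_nonneg_left h2 ha1.le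
      calc |V - dPsi1 - dPsi0 - alpha1 * (S m.I - S 0)
            - ∑ i ∈ Finset.range (m.I + 1), m.hp i * (S i - S 0)|
          ≤ |V - dPsi1 - dPsi0 - alpha1 * (S m.I - S 0)|
            + |∑ i ∈ Finset.range (m.I + 1), m.hp i * (S i - S 0)| :=
            abs_sub _ _
        _ ≤ |V - dPsi1 - dPsi0| + |alpha1 * (S m.I - S 0)|
            + |∑ i ∈ Finset.range (m.I + 1), m.hp i * (S i - S 0)| := by
            linarith [abs_sub (V - dPsi1 - dPsi0) (alpha1 * (S m.I - S 0))]
        _ ≤ |V| + |dPsi1| + |dPsi0| + |alpha1 * (S m.I - S 0)|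
            + |∑ i ∈ Finset.range (m.I + 1), m.hp i * (S i - S 0)| := by
            have h4 := abs_sub (V - dPsi1) dPsi0
            have h5 := abs_sub V dPsi1
            linarith
        _ ≤ |V| + |dPsi1| + |dPsi0| + alpha1 * (R / lam ^ 2) + R / lam ^ 2 := by
            linarith [herr]
    have h7 : |S 0| ≤ (1 + alpha0 + alpha1) * |S 0| := by
      nlinarith [abs_nonneg (S 0)]
    linarith
  intro i hi
  have h9 := hdev i hi
  have h8 : |S i| ≤ |S 0| + |S i - S 0| := by
    calc |S i| = |S 0 + (S i - S 0)| := by ring_nf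
      _ ≤ |S 0| + |S i - S 0| := abs_add_le _ _
  calc |S i| ≤ |S 0| + |S i - S 0| := h8
    _ ≤ |V| + |dPsi0| + |dPsi1| + (1 + alpha1) * (R / lam ^ 2) + R / lam ^ 2 := by
        linarith
    _ = |V| + |dPsi0| + |dPsi1| + (2 + alpha1) * (R / lam ^ 2) := by ring

end Aux2

end Corrosion


set_option maxHeartbeats 2000000

open Corrosion in
/-- combined space-gradient and time-difference estimate on the densities. -/
theorem discrete_gradient_time_estimate
    (d : Data) (heps : 0 ≤ d.eps) (ha0 : 0 < d.alpha0) (ha1 : 0 < d.alpha1) (hH : d.HypH)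
    (T : ℝ) (hT : 0 < T) :
    ∃ C : ℝ, 0 < C ∧ ∀ (K : ℕ), 1 ≤ K → ∀ (m : Mesh)
      (sol : Sp → ℕ → ℕ → ℝ) (Psi : ℕ → ℕ → ℝ),
      Scheme m d T K sol Psi → Stable m d K sol →
      ∀ u : Sp,
        ((∑ k ∈ Finset.range K, ∑ i ∈ Finset.range (m.I + 1),
            T / K * (sol u (k + 1) (i + 1) - sol u (k + 1) i) ^ 2 / m.hp i)
          + d.epsu u / 2 * ∑ k ∈ Finset.range K, ∑ i ∈ Finset.Icc 1 m.I,
              m.h i * (sol u (k + 1) i - sol u k i) ^ 2 ≤ C) ∧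
        d.epsu u * (∑ k ∈ Finset.range K, ∑ i ∈ Finset.Icc 1 m.I,
            m.h i * (sol u (k + 1) i - sol u k i) ^ 2) ≤ 2 * C := by
  classical
  set R : ℝ := 3 * d.umax Sp.P + d.umax Sp.N + |d.rho| with hRdef
  have hRpos : 0 < R := by
    have h1 := d.umax_pos Sp.P; have h2 := d.umax_pos Sp.N
    have h3 := abs_nonneg d.rho
    rw [hRdef]; linarith
  set M : ℝ := |d.V| + |d.dPsi0| + |d.dPsi1| + (2 + d.alpha1) * (R / d.lam ^ 2)
    with hMdef
  have hMnn : 0 ≤ M := by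
    have h1 : 0 ≤ R / d.lam ^ 2 := div_nonneg hRpos.le (sq_nonneg _)
    have h2 : 0 ≤ (2 + d.alpha1) * (R / d.lam ^ 2) := mul_nonneg (by linarith) h1
    have h3 := abs_nonneg d.V; have h4 := abs_nonneg d.dPsi0
    have h5 := abs_nonneg d.dPsi1
    rw [hMdef]; linarith
  set c : ℝ := Real.exp (-(3 * M)) with hcdef
  have hcpos : 0 < c := Real.exp_pos _
  set Pb0 : ℝ := |d.dPsi0| + d.alpha0 * M with hPb0def
  set Pb1 : ℝ := |d.dPsi1| + d.alpha1 * M with hPb1def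
  set D : Sp → ℝ := fun u => (3 * M * d.umax u) ^ 2 / (2 * c) with hDdef
  set G : Sp → ℝ := fun u => d.umax u * (d.m0 u * d.umax u * Real.exp (3 * Pb0)
      + d.k1 u * d.umax u * Real.exp (3 * Pb1)) with hGdef
  set E : Sp → ℝ := fun u => T * (D u + G u) + d.epsu u / 2 * d.umax u ^ 2 with hEdef
  set Cu : Sp → ℝ := fun u => (2 / c + 1) * E u with hCudef
  have hGpos : ∀ u, 0 < G u := by
    intro u
    have h1 := d.umax_pos u; have h2 := d.m0_pos u; have h3 := d.k1_pos u
    have e1 := Real.exp_pos (3 * Pb0); have e2 := Real.exp_pos (3 * Pb1)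
    have h4 : 0 < d.m0 u * d.umax u * Real.exp (3 * Pb0) :=
      mul_pos (mul_pos h2 h1) e1
    have h5 : 0 < d.k1 u * d.umax u * Real.exp (3 * Pb1) :=
      mul_pos (mul_pos h3 h1) e2
    simp only [hGdef]
    exact mul_pos h1 (by linarith)
  have hDnn : ∀ u, 0 ≤ D u := by
    intro u; simp only [hDdef]; positivity
  have hEpos : ∀ u, 0 < E u := by
    intro u
    have h1 : 0 < T * (D u + G u) := mul_pos hT (by linarith [hDnn u, hGpos u])
    have h2 : 0 ≤ d.epsu u / 2 * d.umax u ^ 2 :=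
      mul_nonneg (by linarith [epsu_nonneg d heps u]) (sq_nonneg _)
    simp only [hEdef]; simp only [hDdef, hGdef] at h1 ⊢; linarith
  have hCupos : ∀ u, 0 < Cu u := by
    intro u
    have h1 : 0 < 2 / c + 1 := by positivity
    simp only [hCudef]; exact mul_pos h1 (hEpos u)
  clear_value R M c Pb0 Pb1 D G E Cu
  refine ⟨Cu Sp.P + Cu Sp.N, by linarith [hCupos Sp.P, hCupos Sp.N], ?_⟩
  intro K hK m sol Psi hSch hStab u
  obtain ⟨hS1, hS2, hS3, hS4, hS5, hS6, hS7⟩ := hSch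
  have hKpos : (0:ℝ) < (K : ℝ) := by exact_mod_cast Nat.pos_of_ne_zero (by omega)
  have hDt : 0 < T / K := div_pos hT hKpos
  -- bound on the discrete potential gradient
  have hSb : ∀ k, k < K → ∀ i, i ≤ m.I → |dPsiF m (Psi (k + 1)) i| ≤ M := by
    intro k hk
    have hrho : ∀ i, 1 ≤ i → i ≤ m.I →
        |3 * sol Sp.P (k + 1) i - sol Sp.N (k + 1) i + d.rho| ≤ R := by
      intro i h1 h2
      have hP := hStab Sp.P (k + 1) (by omega) i (by omega)
      have hN := hStab Sp.N (k + 1) (by omega) i (by omega)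
      have h3 := le_abs_self d.rho
      have h4 := neg_abs_le d.rho
      have h5 := d.umax_pos Sp.P
      rw [hRdef, abs_le]
      constructor
      · linarith
      · linarith
    intro i hi
    have hcon := dPsi_bound m (Psi (k + 1)) d.lam d.alpha0 d.alpha1 d.V d.dPsi0
      d.dPsi1 R d.lam_pos ha0 ha1 hRpos.le
      (fun i => 3 * sol Sp.P (k + 1) i - sol Sp.N (k + 1) i + d.rho)
      hrho (fun i h1 h2 => hS2 k hk i h1 h2) (hS4 k hk) (hS5 k hk) i hi
    rw [hMdef]; exact hcon
  -- bounds on boundary values of the potential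
  have hPsi0b : ∀ k, k < K → |Psi (k + 1) 0| ≤ Pb0 := by
    intro k hk
    have h1 := hS4 k hk
    have h2 := hSb k hk 0 (by omega)
    have h3 : Psi (k + 1) 0 = d.dPsi0 + d.alpha0 * dPsiF m (Psi (k + 1)) 0 := by
      linarith
    rw [h3, hPb0def]
    calc |d.dPsi0 + d.alpha0 * dPsiF m (Psi (k + 1)) 0|
        ≤ |d.dPsi0| + |d.alpha0 * dPsiF m (Psi (k + 1)) 0| := abs_add_le _ _
      _ ≤ |d.dPsi0| + d.alpha0 * M := by
          rw [abs_mul, abs_of_pos ha0]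
          have := mul_le_mul_of_nonneg_left h2 ha0.le
          linarith
  have hPsi1b : ∀ k, k < K → |d.V - Psi (k + 1) (m.I + 1)| ≤ Pb1 := by
    intro k hk
    have h1 := hS5 k hk
    have h2 := hSb k hk m.I le_rfl
    have h3 : d.V - Psi (k + 1) (m.I + 1)
        = d.dPsi1 + d.alpha1 * dPsiF m (Psi (k + 1)) m.I := by linarith
    rw [h3, hPb1def]
    calc |d.dPsi1 + d.alpha1 * dPsiF m (Psi (k + 1)) m.I|
        ≤ |d.dPsi1| + |d.alpha1 * dPsiF m (Psi (k + 1)) m.I| := abs_add_le _ _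
      _ ≤ |d.dPsi1| + d.alpha1 * M := by
          rw [abs_mul, abs_of_pos ha1]
          have := mul_le_mul_of_nonneg_left h2 ha1.le
          linarith
  have hepsnn := epsu_nonneg d heps u
  -- per time-step estimate
  have key : ∀ k, k < K →
      c / 2 * (∑ i ∈ Finset.range (m.I + 1),
          (sol u (k + 1) (i + 1) - sol u (k + 1) i) ^ 2 / m.hp i)
        + d.epsu u / (2 * (T / K)) * (∑ i ∈ Finset.Icc 1 m.I,
            m.h i * (sol u (k + 1) i - sol u k i) ^ 2)
      ≤ D u + G u + d.epsu u / (2 * (T / K)) *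
          ((∑ i ∈ Finset.Icc 1 m.I, m.h i * sol u k i ^ 2)
            - ∑ i ∈ Finset.Icc 1 m.I, m.h i * sol u (k + 1) i ^ 2) := by
    intro k hk
    -- (a) pointwise flux lower bound
    have hlow : ∀ i ∈ Finset.range (m.I + 1),
        c / 2 * (sol u (k + 1) (i + 1) - sol u (k + 1) i) ^ 2 / m.hp i
            - (3 * M * d.umax u) ^ 2 / (2 * c) * m.hp i
          ≤ -(Flux m d u (Psi (k + 1)) (sol u (k + 1)) i)
              * (sol u (k + 1) (i + 1) - sol u (k + 1) i) := by
      intro i hi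
      have hiI : i ≤ m.I := by have := Finset.mem_range.mp hi; omega
      rw [flux_eq m d u (Psi (k + 1)) (sol u (k + 1)) i hiI]
      have hbern : c ≤ Bern (z u * m.hp i * dPsiF m (Psi (k + 1)) i) := by
        refine le_trans ?_ (exp_neg_abs_le_Bern _)
        have habs : |z u * m.hp i * dPsiF m (Psi (k + 1)) i| ≤ 3 * 1 * M :=
          abs_mul3_le (abs_z_le u)
            (by rw [abs_of_pos (m.hp_pos hiI)]; exact m.hp_le_one hiI)
            (hSb k hk i hiI)
        rw [hcdef]
        exact Real.exp_le_exp.mpr (by linarith)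
      have hs : |z u * dPsiF m (Psi (k + 1)) i * sol u (k + 1) (i + 1)|
          ≤ 3 * M * d.umax u := by
        have h5 := hStab u (k + 1) (by omega) (i + 1) (by omega)
        have hw5 : |sol u (k + 1) (i + 1)| ≤ d.umax u := by
          rw [abs_of_nonneg h5.1]; exact h5.2
        exact abs_mul3_le (abs_z_le u) (hSb k hk i hiI) hw5
      exact young_aux (Bern (z u * m.hp i * dPsiF m (Psi (k + 1)) i))
        (sol u (k + 1) (i + 1) - sol u (k + 1) i)
        (z u * dPsiF m (Psi (k + 1)) i * sol u (k + 1) (i + 1))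
        (m.hp i) c (3 * M * d.umax u) (m.hp_pos hiI) hcpos hbern hs
    have hsum3 := Finset.sum_le_sum hlow
    have hLHSsum : ∑ i ∈ Finset.range (m.I + 1),
        (c / 2 * (sol u (k + 1) (i + 1) - sol u (k + 1) i) ^ 2 / m.hp i
          - (3 * M * d.umax u) ^ 2 / (2 * c) * m.hp i)
        = c / 2 * (∑ i ∈ Finset.range (m.I + 1),
            (sol u (k + 1) (i + 1) - sol u (k + 1) i) ^ 2 / m.hp i) - D u := by
      have e1 : ∑ i ∈ Finset.range (m.I + 1),
          c / 2 * (sol u (k + 1) (i + 1) - sol u (k + 1) i) ^ 2 / m.hp i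
          = c / 2 * ∑ i ∈ Finset.range (m.I + 1),
              (sol u (k + 1) (i + 1) - sol u (k + 1) i) ^ 2 / m.hp i := by
        rw [Finset.mul_sum]
        exact Finset.sum_congr rfl fun i _ => by ring
      have e2 : ∑ i ∈ Finset.range (m.I + 1),
          (3 * M * d.umax u) ^ 2 / (2 * c) * m.hp i
          = (3 * M * d.umax u) ^ 2 / (2 * c) := by
        rw [← Finset.mul_sum, m.hp_sum, mul_one]
      rw [Finset.sum_sub_distrib, e1, e2, hDdef]
    have hneg : ∑ i ∈ Finset.range (m.I + 1),
        -(Flux m d u (Psi (k + 1)) (sol u (k + 1)) i)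
          * (sol u (k + 1) (i + 1) - sol u (k + 1) i)
        = -∑ i ∈ Finset.range (m.I + 1),
            Flux m d u (Psi (k + 1)) (sol u (k + 1)) i
              * (sol u (k + 1) (i + 1) - sol u (k + 1) i) := by
      rw [← Finset.sum_neg_distrib]
      exact Finset.sum_congr rfl fun i _ => by ring
    -- (b) summation by parts and the scheme
    have habel := abel_sum (Flux m d u (Psi (k + 1)) (sol u (k + 1)))
      (sol u (k + 1)) m.I
    have hsch : ∑ i ∈ Finset.Icc 1 m.I,
        (Flux m d u (Psi (k + 1)) (sol u (k + 1)) i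
          - Flux m d u (Psi (k + 1)) (sol u (k + 1)) (i - 1)) * sol u (k + 1) i
        = -∑ i ∈ Finset.Icc 1 m.I,
            d.epsu u * m.h i * (sol u (k + 1) i - sol u k i) / (T / K)
              * sol u (k + 1) i := by
      rw [← Finset.sum_neg_distrib]
      refine Finset.sum_congr rfl fun i hi => ?_
      have hm := Finset.mem_Icc.mp hi
      have h9 := hS3 u k hk i hm.1 hm.2
      have h10 : Flux m d u (Psi (k + 1)) (sol u (k + 1)) i
          - Flux m d u (Psi (k + 1)) (sol u (k + 1)) (i - 1)
          = -(d.epsu u * m.h i * (sol u (k + 1) i - sol u k i) / (T / K)) := by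
        linarith
      rw [h10, neg_mul]
    -- (c) the time term
    have htime : ∑ i ∈ Finset.Icc 1 m.I,
        d.epsu u * m.h i * (sol u (k + 1) i - sol u k i) / (T / K) * sol u (k + 1) i
        = d.epsu u / (2 * (T / K)) *
            (∑ i ∈ Finset.Icc 1 m.I, m.h i * sol u (k + 1) i ^ 2)
          - d.epsu u / (2 * (T / K)) *
            (∑ i ∈ Finset.Icc 1 m.I, m.h i * sol u k i ^ 2)
          + d.epsu u / (2 * (T / K)) *
            (∑ i ∈ Finset.Icc 1 m.I, m.h i * (sol u (k + 1) i - sol u k i) ^ 2) := by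
      rw [Finset.mul_sum, Finset.mul_sum, Finset.mul_sum, ← Finset.sum_sub_distrib,
        ← Finset.sum_add_distrib]
      refine Finset.sum_congr rfl fun i hi => ?_
      have hTK : T / K ≠ 0 := hDt.ne'
      field_simp
      ring
    -- (d) boundary terms
    have hbdry : Flux m d u (Psi (k + 1)) (sol u (k + 1)) 0 * sol u (k + 1) 0
        - Flux m d u (Psi (k + 1)) (sol u (k + 1)) m.I * sol u (k + 1) (m.I + 1)
        ≤ G u := by
      have h6 := hS6 u k hk
      have h7 := hS7 u k hk
      have hw0 := hStab u (k + 1) (by omega) 0 (by omega)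
      have hwI := hStab u (k + 1) (by omega) (m.I + 1) le_rfl
      have hb0 : 0 ≤ d.beta0 u (Psi (k + 1) 0) := by
        unfold Data.beta0
        have := (d.m0_pos u).le; have := (d.k0_pos u).le
        have := (Real.exp_pos (-(z u) * d.b0 u * Psi (k + 1) 0)).le
        have := (Real.exp_pos (z u * d.a0 u * Psi (k + 1) 0)).le
        positivity
      have hb1 : 0 ≤ d.beta1 u (d.V - Psi (k + 1) (m.I + 1)) := by
        unfold Data.beta1
        have := (d.m1_pos u).le; have := (d.k1_pos u).le
        positivity
      have hg0 : d.gamma0 u (Psi (k + 1) 0)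
          ≤ d.m0 u * d.umax u * Real.exp (3 * Pb0) := by
        unfold Data.gamma0
        have h8 : |(-(z u)) * d.b0 u * Psi (k + 1) 0| ≤ 3 * 1 * Pb0 :=
          abs_mul3_le (by rw [abs_neg]; exact abs_z_le u)
            (by rw [abs_of_nonneg (d.b0_mem u).1]; exact (d.b0_mem u).2)
            (hPsi0b k hk)
        have hexp : -(z u) * d.b0 u * Psi (k + 1) 0 ≤ 3 * Pb0 :=
          le_trans (le_abs_self _) (by linarith)
        exact mul_le_mul_of_nonneg_left (Real.exp_le_exp.mpr hexp)
          (mul_nonneg (d.m0_pos u).le (d.umax_pos u).le)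
      have hg1 : d.gamma1 u (d.V - Psi (k + 1) (m.I + 1))
          ≤ d.k1 u * d.umax u * Real.exp (3 * Pb1) := by
        unfold Data.gamma1
        have h8 : |z u * d.a1 u * (d.V - Psi (k + 1) (m.I + 1))| ≤ 3 * 1 * Pb1 :=
          abs_mul3_le (abs_z_le u)
            (by rw [abs_of_nonneg (d.a1_mem u).1]; exact (d.a1_mem u).2)
            (hPsi1b k hk)
        have hexp : z u * d.a1 u * (d.V - Psi (k + 1) (m.I + 1)) ≤ 3 * Pb1 :=
          le_trans (le_abs_self _) (by linarith)
        exact mul_le_mul_of_nonneg_left (Real.exp_le_exp.mpr hexp)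
          (mul_nonneg (d.k1_pos u).le (d.umax_pos u).le)
      have hg0nn : 0 ≤ d.gamma0 u (Psi (k + 1) 0) := by
        unfold Data.gamma0
        exact mul_nonneg (mul_nonneg (d.m0_pos u).le (d.umax_pos u).le)
          (Real.exp_pos _).le
      have hg1nn : 0 ≤ d.gamma1 u (d.V - Psi (k + 1) (m.I + 1)) := by
        unfold Data.gamma1
        exact mul_nonneg (mul_nonneg (d.k1_pos u).le (d.umax_pos u).le)
          (Real.exp_pos _).le
      -- bound for the left boundary contribution
      have hF0 : Flux m d u (Psi (k + 1)) (sol u (k + 1)) 0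
          = d.gamma0 u (Psi (k + 1) 0)
            - d.beta0 u (Psi (k + 1) 0) * sol u (k + 1) 0 := by linarith
      have hA : Flux m d u (Psi (k + 1)) (sol u (k + 1)) 0 * sol u (k + 1) 0
          ≤ d.m0 u * d.umax u * Real.exp (3 * Pb0) * d.umax u := by
        rw [hF0]
        have e3 : (d.gamma0 u (Psi (k + 1) 0)
            - d.beta0 u (Psi (k + 1) 0) * sol u (k + 1) 0) * sol u (k + 1) 0
            = d.gamma0 u (Psi (k + 1) 0) * sol u (k + 1) 0
              - d.beta0 u (Psi (k + 1) 0) * (sol u (k + 1) 0 * sol u (k + 1) 0) := by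
          ring
        rw [e3]
        have e4 : 0 ≤ d.beta0 u (Psi (k + 1) 0)
            * (sol u (k + 1) 0 * sol u (k + 1) 0) :=
          mul_nonneg hb0 (mul_nonneg hw0.1 hw0.1)
        have e5 : d.gamma0 u (Psi (k + 1) 0) * sol u (k + 1) 0
            ≤ d.m0 u * d.umax u * Real.exp (3 * Pb0) * d.umax u :=
          mul_le_mul hg0 hw0.2 hw0.1
            (mul_nonneg (mul_nonneg (d.m0_pos u).le (d.umax_pos u).le)
              (Real.exp_pos _).le)
        linarith
      have hFI : Flux m d u (Psi (k + 1)) (sol u (k + 1)) m.I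
          = d.beta1 u (d.V - Psi (k + 1) (m.I + 1)) * sol u (k + 1) (m.I + 1)
            - d.gamma1 u (d.V - Psi (k + 1) (m.I + 1)) := h7
      have hB : -(Flux m d u (Psi (k + 1)) (sol u (k + 1)) m.I
            * sol u (k + 1) (m.I + 1))
          ≤ d.k1 u * d.umax u * Real.exp (3 * Pb1) * d.umax u := by
        rw [hFI]
        have e3 : -((d.beta1 u (d.V - Psi (k + 1) (m.I + 1)) * sol u (k + 1) (m.I + 1)
            - d.gamma1 u (d.V - Psi (k + 1) (m.I + 1))) * sol u (k + 1) (m.I + 1))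
            = d.gamma1 u (d.V - Psi (k + 1) (m.I + 1)) * sol u (k + 1) (m.I + 1)
              - d.beta1 u (d.V - Psi (k + 1) (m.I + 1))
                * (sol u (k + 1) (m.I + 1) * sol u (k + 1) (m.I + 1)) := by
          ring
        rw [e3]
        have e4 : 0 ≤ d.beta1 u (d.V - Psi (k + 1) (m.I + 1))
            * (sol u (k + 1) (m.I + 1) * sol u (k + 1) (m.I + 1)) :=
          mul_nonneg hb1 (mul_nonneg hwI.1 hwI.1)
        have e5 : d.gamma1 u (d.V - Psi (k + 1) (m.I + 1)) * sol u (k + 1) (m.I + 1)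
            ≤ d.k1 u * d.umax u * Real.exp (3 * Pb1) * d.umax u :=
          mul_le_mul hg1 hwI.2 hwI.1
            (mul_nonneg (mul_nonneg (d.k1_pos u).le (d.umax_pos u).le)
              (Real.exp_pos _).le)
        linarith
      have hGu : G u = d.m0 u * d.umax u * Real.exp (3 * Pb0) * d.umax u
          + d.k1 u * d.umax u * Real.exp (3 * Pb1) * d.umax u := by
        simp only [hGdef]; ring
      linarith
    -- (e) assemble
    have hexp2 : d.epsu u / (2 * (T / K)) *
        ((∑ i ∈ Finset.Icc 1 m.I, m.h i * sol u k i ^ 2)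
          - ∑ i ∈ Finset.Icc 1 m.I, m.h i * sol u (k + 1) i ^ 2)
        = d.epsu u / (2 * (T / K)) *
            (∑ i ∈ Finset.Icc 1 m.I, m.h i * sol u k i ^ 2)
          - d.epsu u / (2 * (T / K)) *
            (∑ i ∈ Finset.Icc 1 m.I, m.h i * sol u (k + 1) i ^ 2) := by ring
    rw [hLHSsum, hneg] at hsum3
    rw [hsch] at habel
    linarith [hsum3, habel, htime, hbdry, hexp2]
  -- multiply by Δt
  have key2 : ∀ k, k < K →
      c / 2 * (∑ i ∈ Finset.range (m.I + 1),
          T / K * (sol u (k + 1) (i + 1) - sol u (k + 1) i) ^ 2 / m.hp i)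
        + d.epsu u / 2 * (∑ i ∈ Finset.Icc 1 m.I,
            m.h i * (sol u (k + 1) i - sol u k i) ^ 2)
      ≤ T / K * (D u + G u)
        + (d.epsu u / 2 * (∑ i ∈ Finset.Icc 1 m.I, m.h i * sol u k i ^ 2)
          - d.epsu u / 2 * (∑ i ∈ Finset.Icc 1 m.I, m.h i * sol u (k + 1) i ^ 2)) := by
    intro k hk
    have h1 := key k hk
    have h2 := mul_le_mul_of_nonneg_left h1 hDt.le
    have hTK : T / K ≠ 0 := hDt.ne'
    have r0 : ∑ i ∈ Finset.range (m.I + 1),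
        T / K * (sol u (k + 1) (i + 1) - sol u (k + 1) i) ^ 2 / m.hp i
        = T / K * ∑ i ∈ Finset.range (m.I + 1),
            (sol u (k + 1) (i + 1) - sol u (k + 1) i) ^ 2 / m.hp i := by
      rw [Finset.mul_sum]
      exact Finset.sum_congr rfl fun i _ => by ring
    have r1 : T / K * (c / 2 * (∑ i ∈ Finset.range (m.I + 1),
          (sol u (k + 1) (i + 1) - sol u (k + 1) i) ^ 2 / m.hp i)
        + d.epsu u / (2 * (T / K)) * (∑ i ∈ Finset.Icc 1 m.I,
            m.h i * (sol u (k + 1) i - sol u k i) ^ 2))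
        = c / 2 * (T / K * ∑ i ∈ Finset.range (m.I + 1),
            (sol u (k + 1) (i + 1) - sol u (k + 1) i) ^ 2 / m.hp i)
          + d.epsu u / 2 * (∑ i ∈ Finset.Icc 1 m.I,
              m.h i * (sol u (k + 1) i - sol u k i) ^ 2) := by
      rw [mul_add, halve_mul _ _ _ hTK]
      ring
    have r2 : T / K * (D u + G u + d.epsu u / (2 * (T / K)) *
          ((∑ i ∈ Finset.Icc 1 m.I, m.h i * sol u k i ^ 2)
            - ∑ i ∈ Finset.Icc 1 m.I, m.h i * sol u (k + 1) i ^ 2))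
        = T / K * (D u + G u)
          + (d.epsu u / 2 * (∑ i ∈ Finset.Icc 1 m.I, m.h i * sol u k i ^ 2)
            - d.epsu u / 2 * (∑ i ∈ Finset.Icc 1 m.I, m.h i * sol u (k + 1) i ^ 2)) := by
      rw [mul_add, halve_mul _ _ _ hTK]
      ring
    rw [r1, r2] at h2
    rw [r0]
    linarith
  -- sum over k
  have hbig := Finset.sum_le_sum (fun k hk => key2 k (Finset.mem_range.mp hk))
  have hLsplit : ∑ k ∈ Finset.range K,
      (c / 2 * (∑ i ∈ Finset.range (m.I + 1),
          T / K * (sol u (k + 1) (i + 1) - sol u (k + 1) i) ^ 2 / m.hp i)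
        + d.epsu u / 2 * (∑ i ∈ Finset.Icc 1 m.I,
            m.h i * (sol u (k + 1) i - sol u k i) ^ 2))
      = c / 2 * (∑ k ∈ Finset.range K, ∑ i ∈ Finset.range (m.I + 1),
          T / K * (sol u (k + 1) (i + 1) - sol u (k + 1) i) ^ 2 / m.hp i)
        + d.epsu u / 2 * (∑ k ∈ Finset.range K, ∑ i ∈ Finset.Icc 1 m.I,
            m.h i * (sol u (k + 1) i - sol u k i) ^ 2) := by
    rw [Finset.sum_add_distrib, Finset.mul_sum, Finset.mul_sum]
  have hRsplit : ∑ k ∈ Finset.range K,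
      (T / K * (D u + G u)
        + (d.epsu u / 2 * (∑ i ∈ Finset.Icc 1 m.I, m.h i * sol u k i ^ 2)
          - d.epsu u / 2 * (∑ i ∈ Finset.Icc 1 m.I, m.h i * sol u (k + 1) i ^ 2)))
      = T * (D u + G u)
        + (d.epsu u / 2 * (∑ i ∈ Finset.Icc 1 m.I, m.h i * sol u 0 i ^ 2)
          - d.epsu u / 2 * (∑ i ∈ Finset.Icc 1 m.I, m.h i * sol u K i ^ 2)) := by
    rw [Finset.sum_add_distrib, Finset.sum_const, Finset.card_range,
      Finset.sum_range_sub' (fun j => d.epsu u / 2 *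
        (∑ i ∈ Finset.Icc 1 m.I, m.h i * sol u j i ^ 2)) K]
    have : (K : ℕ) • (T / K * (D u + G u)) = (K : ℝ) * (T / K * (D u + G u)) := by
      rw [nsmul_eq_mul]
    rw [this]
    have : (K : ℝ) * (T / K * (D u + G u)) = T * (D u + G u) := by
      field_simp
    rw [this]
  rw [hLsplit, hRsplit] at hbig
  -- initial data bound and positivity
  have hN0 : ∑ i ∈ Finset.Icc 1 m.I, m.h i * sol u 0 i ^ 2 ≤ d.umax u ^ 2 := by
    have h1 : ∀ i ∈ Finset.Icc 1 m.I, m.h i * sol u 0 i ^ 2 ≤ m.h i * d.umax u ^ 2 := by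
      intro i hi
      have hm := Finset.mem_Icc.mp hi
      have hb := hStab u 0 (by omega) i (by omega)
      exact mul_le_mul_of_nonneg_left
        (pow_le_pow_left₀ hb.1 hb.2 2) (m.h_pos hm.1 hm.2).le
    calc ∑ i ∈ Finset.Icc 1 m.I, m.h i * sol u 0 i ^ 2
        ≤ ∑ i ∈ Finset.Icc 1 m.I, m.h i * d.umax u ^ 2 := Finset.sum_le_sum h1
      _ = d.umax u ^ 2 := by rw [← Finset.sum_mul, m.h_sum, one_mul]
  have hNK : 0 ≤ ∑ i ∈ Finset.Icc 1 m.I, m.h i * sol u K i ^ 2 := by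
    apply Finset.sum_nonneg
    intro i hi
    have hm := Finset.mem_Icc.mp hi
    exact mul_nonneg (m.h_pos hm.1 hm.2).le (sq_nonneg _)
  have hSxnn : 0 ≤ ∑ k ∈ Finset.range K, ∑ i ∈ Finset.range (m.I + 1),
      T / K * (sol u (k + 1) (i + 1) - sol u (k + 1) i) ^ 2 / m.hp i := by
    apply Finset.sum_nonneg
    intro k _
    apply Finset.sum_nonneg
    intro i hi
    have hiI : i ≤ m.I := by have := Finset.mem_range.mp hi; omega
    exact div_nonneg (mul_nonneg hDt.le (sq_nonneg _)) (m.hp_pos hiI).le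
  have hSynn : 0 ≤ ∑ k ∈ Finset.range K, ∑ i ∈ Finset.Icc 1 m.I,
      m.h i * (sol u (k + 1) i - sol u k i) ^ 2 := by
    apply Finset.sum_nonneg
    intro k _
    apply Finset.sum_nonneg
    intro i hi
    have hm := Finset.mem_Icc.mp hi
    exact mul_nonneg (m.h_pos hm.1 hm.2).le (sq_nonneg _)
  -- final bound
  have hfin : c / 2 * (∑ k ∈ Finset.range K, ∑ i ∈ Finset.range (m.I + 1),
        T / K * (sol u (k + 1) (i + 1) - sol u (k + 1) i) ^ 2 / m.hp i)
      + d.epsu u / 2 * (∑ k ∈ Finset.range K, ∑ i ∈ Finset.Icc 1 m.I,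
          m.h i * (sol u (k + 1) i - sol u k i) ^ 2) ≤ E u := by
    have h1 : d.epsu u / 2 * (∑ i ∈ Finset.Icc 1 m.I, m.h i * sol u 0 i ^ 2)
        ≤ d.epsu u / 2 * d.umax u ^ 2 :=
      mul_le_mul_of_nonneg_left hN0 (by linarith)
    have h2 : 0 ≤ d.epsu u / 2 * (∑ i ∈ Finset.Icc 1 m.I, m.h i * sol u K i ^ 2) :=
      mul_nonneg (by linarith) hNK
    have h3 : E u = T * (D u + G u) + d.epsu u / 2 * d.umax u ^ 2 := by
      rw [hEdef]
    linarith
  have hEu := hEpos u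
  have hCuu : Cu u = (2 / c + 1) * E u := by rw [hCudef]
  have hqq : 0 ≤ d.epsu u / 2 * (∑ k ∈ Finset.range K, ∑ i ∈ Finset.Icc 1 m.I,
      m.h i * (sol u (k + 1) i - sol u k i) ^ 2) :=
    mul_nonneg (by linarith) hSynn
  have hX : (∑ k ∈ Finset.range K, ∑ i ∈ Finset.range (m.I + 1),
        T / K * (sol u (k + 1) (i + 1) - sol u (k + 1) i) ^ 2 / m.hp i)
      ≤ 2 / c * E u := by
    have h2 : c / 2 * (∑ k ∈ Finset.range K, ∑ i ∈ Finset.range (m.I + 1),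
        T / K * (sol u (k + 1) (i + 1) - sol u (k + 1) i) ^ 2 / m.hp i) ≤ E u := by
      linarith
    have h3 := mul_le_mul_of_nonneg_left h2 (by positivity : (0:ℝ) ≤ 2 / c)
    have h4 : 2 / c * (c / 2 * (∑ k ∈ Finset.range K, ∑ i ∈ Finset.range (m.I + 1),
        T / K * (sol u (k + 1) (i + 1) - sol u (k + 1) i) ^ 2 / m.hp i))
        = ∑ k ∈ Finset.range K, ∑ i ∈ Finset.range (m.I + 1),
            T / K * (sol u (k + 1) (i + 1) - sol u (k + 1) i) ^ 2 / m.hp i := by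
      have hcc : 2 / c * (c / 2) = 1 := by
        field_simp
      rw [← mul_assoc, hcc, one_mul]
    linarith
  have hY : d.epsu u / 2 * (∑ k ∈ Finset.range K, ∑ i ∈ Finset.Icc 1 m.I,
      m.h i * (sol u (k + 1) i - sol u k i) ^ 2) ≤ E u := by
    have h2 : 0 ≤ c / 2 * (∑ k ∈ Finset.range K, ∑ i ∈ Finset.range (m.I + 1),
        T / K * (sol u (k + 1) (i + 1) - sol u (k + 1) i) ^ 2 / m.hp i) :=
      mul_nonneg (by positivity) hSxnn
    linarith
  have hCuE : E u ≤ Cu u := by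
    have h1 : 0 ≤ 2 / c * E u := mul_nonneg (by positivity) hEu.le
    have h2 : Cu u = 2 / c * E u + E u := by rw [hCuu]; ring
    linarith
  have hring : (2 / c + 1) * E u = 2 / c * E u + E u := by ring
  constructor
  · have h5 : (∑ k ∈ Finset.range K, ∑ i ∈ Finset.range (m.I + 1),
        T / K * (sol u (k + 1) (i + 1) - sol u (k + 1) i) ^ 2 / m.hp i)
        + d.epsu u / 2 * (∑ k ∈ Finset.range K, ∑ i ∈ Finset.Icc 1 m.I,
            m.h i * (sol u (k + 1) i - sol u k i) ^ 2) ≤ Cu u := by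
      rw [hCuu, hring]
      linarith
    cases u
    · linarith [hCupos Sp.N]
    · linarith [hCupos Sp.P]
  · have h5 : d.epsu u * (∑ k ∈ Finset.range K, ∑ i ∈ Finset.Icc 1 m.I,
        m.h i * (sol u (k + 1) i - sol u k i) ^ 2) ≤ 2 * Cu u := by
      nlinarith [hY, hCuE]
    cases u
    · linarith [hCupos Sp.N]
    · linarith [hCupos Sp.P]
end
end

section
/- Let f : ℝ → ℝ be defined by f(x) = x·coth(x) for x ≠ 0 and f(0) = 1 (where coth(x) = cosh(x)/sinh(x)). Then f(x) ≥ 1 for all x ∈ ℝ, and f is 1-Lipschitz continuous: |f(x) − f(y)| ≤ |x − y| for all x, y ∈ ℝ. -/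
open MeasureTheory Real Filter Topology

noncomputable section

noncomputable def xcAux (x : ℝ) : ℝ := if x = 0 then 1 else x * (Real.cosh x / Real.sinh x)

lemma xcAux_neg (x : ℝ) : xcAux (-x) = xcAux x := by
  unfold xcAux
  rcases eq_or_ne x 0 with h | h
  · simp [h]
  · simp [h, neg_eq_zero, Real.cosh_neg, Real.sinh_neg]
    ring

lemma xcAux_abs (x : ℝ) : xcAux |x| = xcAux x := by
  rcases abs_cases x with ⟨h, _⟩ | ⟨h, _⟩
  · rw [h]
  · rw [h, xcAux_neg]

lemma xcAux_hasDerivAt {x : ℝ} (hx : 0 < x) :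
    HasDerivAt xcAux ((Real.sinh x * Real.cosh x - x) / Real.sinh x ^ 2) x := by
  have hs : Real.sinh x ≠ 0 := (Real.sinh_pos_iff.mpr hx).ne'
  have h1 : HasDerivAt (fun y : ℝ => y * Real.cosh y)
      (1 * Real.cosh x + x * Real.sinh x) x :=
    (hasDerivAt_id x).mul (Real.hasDerivAt_cosh x)
  have h3 := h1.div (Real.hasDerivAt_sinh x) hs
  have hval : ((1 * Real.cosh x + x * Real.sinh x) * Real.sinh x -
      x * Real.cosh x * Real.cosh x) / Real.sinh x ^ 2
      = (Real.sinh x * Real.cosh x - x) / Real.sinh x ^ 2 := by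
    congr 1
    linear_combination (-x) * Real.cosh_sq_sub_sinh_sq x
  rw [hval] at h3
  refine h3.congr_of_eventuallyEq ?_
  filter_upwards [eventually_ne_nhds hx.ne'] with y hy
  simp [xcAux, hy, mul_div_assoc]

lemma xcAux_continuousOn : ContinuousOn xcAux (Set.Ici 0) := by
  intro x hx
  rcases eq_or_lt_of_le (Set.mem_Ici.mp hx) with h | h
  · -- x = 0
    subst h
    have hslope : Filter.Tendsto (fun y : ℝ => Real.sinh y / y) (𝓝[≠] (0:ℝ)) (𝓝 1) := by
      have := hasDerivAt_iff_tendsto_slope.mp (Real.hasDerivAt_sinh 0)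
      simpa [slope_fun_def, Real.sinh_zero, Real.cosh_zero, div_eq_inv_mul] using this
    have hinv : Filter.Tendsto (fun y : ℝ => y / Real.sinh y) (𝓝[≠] (0:ℝ)) (𝓝 1) := by
      have := hslope.inv₀ one_ne_zero
      simpa using this
    have hcosh : Filter.Tendsto (fun y : ℝ => Real.cosh y) (𝓝[≠] (0:ℝ)) (𝓝 1) := by
      have : Filter.Tendsto Real.cosh (𝓝 (0:ℝ)) (𝓝 1) := by
        simpa using Real.continuous_cosh.tendsto 0
      exact this.mono_left nhdsWithin_le_nhds
    have hmain : Filter.Tendsto xcAux (𝓝[≠] (0:ℝ)) (𝓝 1) := by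
      have h := hinv.mul hcosh
      rw [one_mul] at h
      refine h.congr' ?_
      filter_upwards [self_mem_nhdsWithin] with y hy
      have hy' : y ≠ 0 := hy
      simp only [xcAux, hy', ↓reduceIte]; ring
    have hct : ContinuousAt xcAux 0 := by
      unfold ContinuousAt
      rw [show xcAux 0 = 1 by simp [xcAux]]
      rw [← nhdsNE_sup_pure (0:ℝ), Filter.tendsto_sup]
      exact ⟨hmain, by simpa [xcAux] using tendsto_pure_nhds xcAux 0⟩
    exact hct.continuousWithinAt
  · exact ((xcAux_hasDerivAt h).differentiableAt.continuousAt).continuousWithinAt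

lemma xcAux_mono : MonotoneOn xcAux (Set.Ici 0) := by
  refine monotoneOn_of_deriv_nonneg (convex_Ici 0) xcAux_continuousOn ?_ ?_
  · intro x hx
    rw [interior_Ici] at hx
    exact (xcAux_hasDerivAt hx).differentiableAt.differentiableWithinAt
  · intro x hx
    rw [interior_Ici] at hx
    rw [(xcAux_hasDerivAt hx).deriv]
    have h1 : x < Real.sinh x := Real.self_lt_sinh_iff.mpr hx
    have h2 : 1 ≤ Real.cosh x := Real.one_le_cosh x
    have h3 : 0 < Real.sinh x := Real.sinh_pos_iff.mpr hx
    apply div_nonneg _ (sq_nonneg _)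
    nlinarith

lemma xcAux_sub_mono : MonotoneOn (fun x => x - xcAux x) (Set.Ici 0) := by
  refine monotoneOn_of_deriv_nonneg (convex_Ici 0)
    (continuousOn_id.sub xcAux_continuousOn) ?_ ?_
  · intro x hx
    rw [interior_Ici] at hx
    exact ((hasDerivAt_id' x).sub (xcAux_hasDerivAt hx)).differentiableAt.differentiableWithinAt
  · intro x hx
    rw [interior_Ici] at hx
    rw [HasDerivAt.deriv (f := fun x => x - xcAux x) ((hasDerivAt_id' x).sub (xcAux_hasDerivAt hx))]
    have h3 : 0 < Real.sinh x := Real.sinh_pos_iff.mpr hx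
    have key : Real.sinh x * Real.cosh x - x ≤ Real.sinh x ^ 2 := by
      have he : Real.exp (-x) ^ 2 = Real.exp (-(2*x)) := by
        rw [sq, ← Real.exp_add]; ring_nf
      have h4 : -(2*x) + 1 ≤ Real.exp (-(2*x)) := Real.add_one_le_exp _
      have h5 : Real.exp x * Real.exp (-x) = 1 := by
        rw [← Real.exp_add]; simp
      rw [Real.sinh_eq, Real.cosh_eq]
      nlinarith [Real.exp_pos x, Real.exp_pos (-x)]
    have : (Real.sinh x * Real.cosh x - x) / Real.sinh x ^ 2 ≤ 1 := by
      rw [div_le_one (by positivity)]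
      nlinarith
    linarith

lemma xcAux_key {a b : ℝ} (ha : 0 ≤ a) (hab : a ≤ b) : |xcAux b - xcAux a| ≤ b - a := by
  have hb : 0 ≤ b := ha.trans hab
  have h1 : xcAux a ≤ xcAux b := xcAux_mono ha hb hab
  have h2 : a - xcAux a ≤ b - xcAux b := xcAux_sub_mono ha hb hab
  rw [abs_of_nonneg (by linarith)]
  linarith

open Corrosion in
/-- `x ↦ x coth x` (extended by `1` at `0`) is `≥ 1` and 1-Lipschitz. -/
theorem xcoth_ge_one_and_lipschitz (f : ℝ → ℝ)
    (hf : ∀ x, f x = if x = 0 then 1 else x * coth x) :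
    (∀ x, 1 ≤ f x) ∧ ∀ x y, |f x - f y| ≤ |x - y| := by
  have hfx : ∀ x, f x = xcAux x := by
    intro x
    rw [hf x]
    unfold xcAux Corrosion.coth
    rcases eq_or_ne x 0 with h | h <;> simp [h]
  have hone : ∀ x, 1 ≤ f x := by
    intro x
    rw [hfx x, ← xcAux_abs x]
    have h0 : xcAux 0 = 1 := by simp [xcAux]
    calc (1:ℝ) = xcAux 0 := h0.symm
      _ ≤ xcAux |x| := xcAux_mono (le_refl (0:ℝ)) (abs_nonneg x) (abs_nonneg x)
  refine ⟨hone, fun x y => ?_⟩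
  rw [hfx x, hfx y, ← xcAux_abs x, ← xcAux_abs y]
  have habs : |(|x| - |y|)| ≤ |x - y| := abs_abs_sub_abs_le_abs_sub x y
  set a := |x| with ha
  set b := |y| with hb
  have ha0 : 0 ≤ a := abs_nonneg x
  have hb0 : 0 ≤ b := abs_nonneg y
  rcases le_total b a with h | h
  · have h2 := xcAux_key hb0 h
    have h3 : a - b ≤ |a - b| := le_abs_self _
    linarith
  · have h2 := xcAux_key ha0 h
    rw [abs_sub_comm]
    have h3 : b - a ≤ |b - a| := le_abs_self _
    have h4 : |b - a| = |a - b| := abs_sub_comm _ _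
    linarith
end
end
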